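/- For the Maxwell–Boltzmann family P_λ on a finite set X of reals with at least two distinct squared values, the entropy H(P_λ) is a strictly monotonically decreasing function of λ for λ ≥ 0. -/

import Mathlib

/-- The Maxwell–Boltzmann distribution with rate parameter `lam`. -/
noncomputable def mbDist {ι : Type*} [Fintype ι] (a : ι → ℝ) (lam : ℝ) (i : ι) : ℝ :=
  Real.exp (-lam * (a i) ^ 2) / ∑ j, Real.exp (-lam * (a j) ^ 2)

/-- Shannon entropy (in bits). -/
noncomputable def shannonEntropy {ι : Type*} [Fintype ι] (p : ι → ℝ) : ℝ :=
  -∑ i, p i * Real.logb 2 (p i)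

section aux
variable {ι : Type*} [Fintype ι] [Nonempty ι]

noncomputable def mbZ (E : ι → ℝ) (l : ℝ) : ℝ := ∑ i, Real.exp (-l * E i)
noncomputable def mbS (E : ι → ℝ) (l : ℝ) : ℝ := ∑ i, E i * Real.exp (-l * E i)
noncomputable def mbT (E : ι → ℝ) (l : ℝ) : ℝ := ∑ i, (E i)^2 * Real.exp (-l * E i)
noncomputable def mbF (E : ι → ℝ) (l : ℝ) : ℝ := Real.log (mbZ E l) + l * mbS E l / mbZ E l

lemma mbZ_pos (E : ι → ℝ) (l : ℝ) : 0 < mbZ E l :=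
  Finset.sum_pos (fun i _ => Real.exp_pos _) Finset.univ_nonempty

lemma hasDerivAt_mbZ (E : ι → ℝ) (x : ℝ) : HasDerivAt (mbZ E) (-mbS E x) x := by
  have h : ∀ i ∈ Finset.univ (α := ι), HasDerivAt (fun l => Real.exp (-l * E i))
      (Real.exp (-x * E i) * (-1 * E i)) x := fun i _ =>
    (((hasDerivAt_id x).neg.mul_const (E i)).exp)
  have heq : (∑ i, Real.exp (-x * E i) * (-1 * E i)) = -mbS E x := by
    rw [mbS, ← Finset.sum_neg_distrib]
    exact Finset.sum_congr rfl fun i _ => by ring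
  exact heq ▸ HasDerivAt.fun_sum h

lemma hasDerivAt_mbS (E : ι → ℝ) (x : ℝ) : HasDerivAt (mbS E) (-mbT E x) x := by
  have h : ∀ i ∈ Finset.univ (α := ι), HasDerivAt (fun l => E i * Real.exp (-l * E i))
      (E i * (Real.exp (-x * E i) * (-1 * E i))) x := fun i _ =>
    (((hasDerivAt_id x).neg.mul_const (E i)).exp).const_mul (E i)
  have heq : (∑ i, E i * (Real.exp (-x * E i) * (-1 * E i))) = -mbT E x := by
    rw [mbT, ← Finset.sum_neg_distrib]
    exact Finset.sum_congr rfl fun i _ => by ring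
  exact heq ▸ HasDerivAt.fun_sum h

lemma mb_cs (E : ι → ℝ) (l : ℝ) {i0 j0 : ι} (hij : E i0 ≠ E j0) :
    mbS E l ^ 2 < mbT E l * mbZ E l := by
  set w : ι → ℝ := fun i => Real.exp (-l * E i) with hw
  have hZ : mbZ E l = ∑ i, w i := rfl
  have hS : mbS E l = ∑ i, E i * w i := rfl
  have hT : mbT E l = ∑ i, (E i)^2 * w i := rfl
  have key : ∑ i, ∑ j, (E i - E j)^2 * (w i * w j)
      = 2 * (mbT E l * mbZ E l - mbS E l ^ 2) := by
    have h1 : ∀ i : ι, ∑ j, (E i - E j)^2 * (w i * w j)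
        = ((E i)^2 * w i) * mbZ E l - 2 * ((E i * w i) * mbS E l) + w i * mbT E l := by
      intro i
      rw [hZ, hS, hT, Finset.mul_sum, Finset.mul_sum, Finset.mul_sum, Finset.mul_sum,
        ← Finset.sum_sub_distrib, ← Finset.sum_add_distrib]
      exact Finset.sum_congr rfl fun j _ => by ring
    rw [Finset.sum_congr rfl fun i _ => h1 i, Finset.sum_add_distrib, Finset.sum_sub_distrib,
      ← Finset.sum_mul, ← Finset.sum_mul, ← Finset.mul_sum, ← Finset.sum_mul,
      ← hZ, ← hS, ← hT]
    ring
  have hpos : 0 < ∑ i, ∑ j, (E i - E j)^2 * (w i * w j) := by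
    have hwpos : ∀ i, 0 < w i := fun i => Real.exp_pos _
    apply Finset.sum_pos' (fun i _ => Finset.sum_nonneg fun j _ => by positivity)
    refine ⟨i0, Finset.mem_univ _,
      Finset.sum_pos' (fun j _ => by positivity) ⟨j0, Finset.mem_univ _, ?_⟩⟩
    have h0 := sub_ne_zero.mpr hij
    have h1 : 0 < (E i0 - E j0)^2 := by positivity
    have h2 := hwpos i0
    have h3 := hwpos j0
    positivity
  nlinarith [key, hpos]

lemma hasDerivAt_mbF (E : ι → ℝ) (x : ℝ) :
    HasDerivAt (mbF E) (-(x * (mbT E x * mbZ E x - mbS E x ^ 2)) / mbZ E x ^ 2) x := by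
  have hZ := hasDerivAt_mbZ E x
  have hS := hasDerivAt_mbS E x
  have hZpos := mbZ_pos E x
  have h1 : HasDerivAt (fun l => Real.log (mbZ E l)) (-mbS E x / mbZ E x) x := hZ.log hZpos.ne'
  have h2 : HasDerivAt (fun l => l * mbS E l) (1 * mbS E x + x * (-mbT E x)) x :=
    (hasDerivAt_id x).mul hS
  have h3 : HasDerivAt (fun l => l * mbS E l / mbZ E l)
      (((1 * mbS E x + x * (-mbT E x)) * mbZ E x - (x * mbS E x) * (-mbS E x)) / mbZ E x ^ 2) x :=
    h2.div hZ hZpos.ne'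
  have h4 := h1.add h3
  refine h4.congr_deriv ?_
  rw [div_add_div _ _ hZpos.ne' (pow_ne_zero 2 hZpos.ne'), div_eq_div_iff (mul_ne_zero hZpos.ne' (pow_ne_zero 2 hZpos.ne')) (pow_ne_zero 2 hZpos.ne')]
  ring

lemma mbF_strictAntiOn (E : ι → ℝ) (hdist : ∃ i j : ι, E i ≠ E j) :
    StrictAntiOn (mbF E) (Set.Ici 0) := by
  obtain ⟨i0, j0, hij⟩ := hdist
  apply strictAntiOn_of_deriv_neg (convex_Ici 0)
  · exact fun x _ => ((hasDerivAt_mbF E x).continuousAt).continuousWithinAt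
  · intro x hx
    rw [interior_Ici] at hx
    rw [(hasDerivAt_mbF E x).deriv]
    have hcs := mb_cs E x hij
    have hZpos := mbZ_pos E x
    apply div_neg_of_neg_of_pos
    · have : 0 < x * (mbT E x * mbZ E x - mbS E x ^ 2) := mul_pos hx (by linarith)
      linarith
    · positivity

lemma mb_entropy_eq (a : ι → ℝ) (l : ℝ) :
    shannonEntropy (mbDist a l) = mbF (fun i => (a i)^2) l / Real.log 2 := by
  set E : ι → ℝ := fun i => (a i)^2 with hE
  have hZpos := mbZ_pos E l
  have hlog2 : Real.log 2 ≠ 0 := (Real.log_pos (by norm_num)).ne'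
  have hterm : ∀ i : ι, mbDist a l i * Real.logb 2 (mbDist a l i)
      = (Real.exp (-l * E i) * (-l * E i) - Real.exp (-l * E i) * Real.log (mbZ E l))
        / (mbZ E l * Real.log 2) := by
    intro i
    have hwpos : 0 < Real.exp (-l * E i) := Real.exp_pos _
    rw [mbDist, Real.logb, show (∑ j, Real.exp (-l * (a j)^2)) = mbZ E l from rfl,
      Real.log_div hwpos.ne' hZpos.ne', Real.log_exp]
    field_simp
    ring
  rw [shannonEntropy, Finset.sum_congr rfl fun i _ => hterm i, ← Finset.sum_div,
    Finset.sum_sub_distrib]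
  have h1 : ∑ i, Real.exp (-l * E i) * (-l * E i) = -l * mbS E l := by
    rw [mbS, Finset.mul_sum]; exact Finset.sum_congr rfl fun i _ => by ring
  have h2 : ∑ i, Real.exp (-l * E i) * Real.log (mbZ E l) = mbZ E l * Real.log (mbZ E l) := by
    rw [← Finset.sum_mul]; rfl
  rw [h1, h2, mbF]
  field_simp
  ring

end aux

theorem mb_entropy_strictAntiOn {ι : Type*} [Fintype ι] [Nonempty ι]
    (a : ι → ℝ) (hdist : ∃ i j : ι, (a i) ^ 2 ≠ (a j) ^ 2) :
    StrictAntiOn (fun lam : ℝ => shannonEntropy (mbDist a lam)) (Set.Ici 0) := by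
  have hF := mbF_strictAntiOn (fun i => (a i)^2) hdist
  intro x hx y hy hxy
  simp only [mb_entropy_eq]
  have hlog2 : (0:ℝ) < Real.log 2 := Real.log_pos (by norm_num)
  exact (div_lt_div_iff_of_pos_right hlog2).mpr (hF hx hy hxy)
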